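/- Quantum teleportation identity: let TP = (H⊗I)·CNOT acting on registers (M,L), and let |epr⟩ be an EPR pair of length n shared on registers (L,R). For any pure state |φ,τ⟩ on registers (M,N) separable from the EPR pair, TP^{(M,L)} |φ⟩^M |epr⟩^{L,R} |τ⟩^N = 2^{−n} Σ_{z,x∈{0,1}^n} |z⟩^M |x⟩^L ⊗ P_{(z,x)}^R |φ⟩^R |τ⟩^N, where P_{(z,x)} = X^x Z^z. -/

import Mathlib

/-- Amplitudes of an EPR pair of length `n` on two registers: `2^{-n/2}` iff the registers
agree.  -/
noncomputable def eprAmp (n : ℕ) (l r : Fin n → ZMod 2) : ℂ :=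
  ((Real.sqrt (2 ^ n) : ℝ) : ℂ)⁻¹ * (if l = r then 1 else 0)

/-- The teleportation unitary `TP = (H ⊗ I) · CNOT` acting on registers `(M, L)` of a state
on registers `(M, L, R, N)`: transversal `CNOT` from `M` to `L` followed by Hadamards on
`M`.  Written in components: `(TP Ψ)(z, x, r, t) = 2^{-n/2} Σ_m (−1)^{⟨z,m⟩} Ψ(m, x⊕m, r, t)`. -/
noncomputable def tpApply (n : ℕ) (ν : Type) [Fintype ν]
    (Ψ : (Fin n → ZMod 2) × (Fin n → ZMod 2) × (Fin n → ZMod 2) × ν → ℂ) :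
    (Fin n → ZMod 2) × (Fin n → ZMod 2) × (Fin n → ZMod 2) × ν → ℂ :=
  fun p => ((Real.sqrt (2 ^ n) : ℝ) : ℂ)⁻¹ *
    ∑ m : Fin n → ZMod 2,
      (-1 : ℂ) ^ ((∑ i, p.1 i * m i : ZMod 2)).val * Ψ (m, p.2.1 + m, p.2.2.1, p.2.2.2)

/-- **quantum teleportation identity.** For any joint state `|φ,τ⟩` of the
message register `M` and an external register `N` (amplitudes `ψ`), separable from the EPR
pair on `(L, R)`,
`TP^{M,L} |φ⟩^M |epr⟩^{L,R} |τ⟩^N = 2^{-n} Σ_{z,x} |z⟩^M |x⟩^L ⊗ P_{(z,x)}^R |φ⟩^R |τ⟩^N`,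
where `P_{(z,x)} = X^x Z^z`, i.e. in components the resulting amplitude at `(z, x, r, t)` is
`2^{-n} (−1)^{⟨z, r⊕x⟩} ψ(r⊕x, t)`. -/
theorem stmt6 (n : ℕ) (ν : Type) [Fintype ν]
    (ψ : (Fin n → ZMod 2) × ν → ℂ) :
    tpApply n ν (fun p => ψ (p.1, p.2.2.2) * eprAmp n p.2.1 p.2.2.1)
      = fun p => ((2 : ℂ) ^ n)⁻¹ *
          ((-1 : ℂ) ^ ((∑ i, p.1 i * (p.2.2.1 i + p.2.1 i) : ZMod 2)).val *
            ψ (p.2.2.1 + p.2.1, p.2.2.2)) := by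
  funext p
  obtain ⟨z, x, r, t⟩ := p
  simp only [tpApply, eprAmp]
  have hxx : x + x = 0 := by funext i; exact CharTwo.add_self_eq_zero (x i)
  have hsum : ∀ m : Fin n → ZMod 2,
      (-1 : ℂ) ^ ((∑ i, z i * m i : ZMod 2)).val *
        (ψ (m, t) * (((Real.sqrt (2 ^ n) : ℝ) : ℂ)⁻¹ * (if x + m = r then 1 else 0)))
      = if m = r + x then
          (-1 : ℂ) ^ ((∑ i, z i * (r + x) i : ZMod 2)).val *
            (ψ (r + x, t) * ((Real.sqrt (2 ^ n) : ℝ) : ℂ)⁻¹) else 0 := by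
    intro m
    have h : (x + m = r) ↔ (m = r + x) := by
      constructor
      · intro h; rw [← h]; funext i
        show m i = x i + m i + x i
        rw [add_comm, ← add_assoc, CharTwo.add_self_eq_zero, zero_add]
      · intro h; rw [h]; funext i
        show x i + (r i + x i) = r i
        rw [add_comm (r i), ← add_assoc, CharTwo.add_self_eq_zero, zero_add]
    by_cases hm : m = r + x
    · subst hm; rw [if_pos rfl, if_pos (h.mpr rfl), mul_one]
    · rw [if_neg hm, if_neg (fun hc => hm (h.mp hc)), mul_zero, mul_zero, mul_zero]
  rw [Finset.sum_congr rfl (fun m _ => hsum m), Finset.sum_ite_eq' Finset.univ (r + x)]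
  simp only [Finset.mem_univ, if_true]
  have hr : ∀ i, (r + x) i = r i + x i := fun i => rfl
  have hsq : ((Real.sqrt (2 ^ n) : ℝ) : ℂ)⁻¹ * ((Real.sqrt (2 ^ n) : ℝ) : ℂ)⁻¹
      = ((2 : ℂ) ^ n)⁻¹ := by
    rw [← mul_inv]
    norm_cast
    rw [Real.mul_self_sqrt (by positivity)]
    push_cast; ring_nf
  simp only [Pi.add_apply, mul_add]
  ring_nf
  rw [show ((Real.sqrt (2 ^ n) : ℝ) : ℂ)⁻¹ ^ 2 = ((2:ℂ)^n)⁻¹ by rw [sq]; exact hsq]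
  simp only [one_div, inv_pow]
  ring
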